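/- Let γ : ℝ → ℂ be a C¹ loop, p ∈ ℂ with γ(t) ≠ p for all t, and v ∈ ℂ with v ≠ 0. Suppose the set Z = {t ∈ [0,1) : γ(t) = p + s·v for some real s > 0} is finite and for every t ∈ Z one has det(v, deriv γ t) ≠ 0, where det(a,b) := a.re·b.im − a.im·b.re. Then ind_p(γ) = ∑_{t ∈ Z} sign(det(v, deriv γ t)). -/

import Mathlib

open Set Filter
open scoped Topology BigOperators
open Set Filter
open scoped Topology

lemma slope_right_gt {φ : ℝ → ℝ} {a d : ℝ} (h : HasDerivAt φ d a) (hd : 0 < d) :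
    ∀ᶠ t in 𝓝[>] a, φ a < φ t := by
  have h1 : Tendsto (slope φ a) (𝓝[≠] a) (𝓝 d) := hasDerivAt_iff_tendsto_slope.1 h
  have h2 : ∀ᶠ t in 𝓝[≠] a, 0 < slope φ a t := h1.eventually_const_lt hd
  have h3 : 𝓝[>] a ≤ 𝓝[≠] a := nhdsWithin_mono a fun t ht => ne_of_gt ht
  filter_upwards [h3 h2, self_mem_nhdsWithin] with t ht (hta : a < t)
  rw [slope_def_field, div_pos_iff] at ht
  rcases ht with ⟨h5, _⟩ | ⟨_, h6⟩ <;> linarith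

lemma slope_left_lt {φ : ℝ → ℝ} {a d : ℝ} (h : HasDerivAt φ d a) (hd : 0 < d) :
    ∀ᶠ t in 𝓝[<] a, φ t < φ a := by
  have h1 : Tendsto (slope φ a) (𝓝[≠] a) (𝓝 d) := hasDerivAt_iff_tendsto_slope.1 h
  have h2 : ∀ᶠ t in 𝓝[≠] a, 0 < slope φ a t := h1.eventually_const_lt hd
  have h3 : 𝓝[<] a ≤ 𝓝[≠] a := nhdsWithin_mono a fun t ht => ne_of_lt ht
  filter_upwards [h3 h2, self_mem_nhdsWithin] with t ht (hta : t < a)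
  rw [slope_def_field, div_pos_iff] at ht
  rcases ht with ⟨_, h5⟩ | ⟨h6, _⟩ <;> linarith

lemma segment_pos {φ : ℝ → ℝ} {a b da db : ℝ} {m : ℤ} (hab : a < b)
    (hc : Continuous φ)
    (ha : HasDerivAt φ da a) (hb : HasDerivAt φ db b)
    (hma : φ a = m) (hmb : ∃ z : ℤ, φ b = z)
    (hnint : ∀ t ∈ Ioo a b, ∀ z : ℤ, φ t ≠ z)
    (hda : 0 < da) (hdb : db ≠ 0) :
    φ b - φ a = (Real.sign da + Real.sign db) / 2 := by
  have hev1 : ∀ᶠ t in 𝓝[>] a, φ a < φ t := slope_right_gt ha hda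
  have hev2 : ∀ᶠ t in 𝓝[>] a, φ t < m + 1 := by
    have : Tendsto φ (𝓝[>] a) (𝓝 (φ a)) :=
      (hc.tendsto a).mono_left nhdsWithin_le_nhds
    exact this.eventually_lt_const (by rw [hma]; linarith)
  have hev3 : ∀ᶠ t in 𝓝[>] a, t < b := eventually_nhdsWithin_of_eventually_nhds
    (eventually_lt_nhds hab)
  have hself : ∀ᶠ t in 𝓝[>] a, a < t := self_mem_nhdsWithin
  obtain ⟨x₀, hgt, hlt, hxb, hxa⟩ := (hev1.and (hev2.and (hev3.and hself))).exists
  rw [hma] at hgt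
  have hconn : IsPreconnected (φ '' Ioo a b) := isPreconnected_Ioo.image φ hc.continuousOn
  have hord := hconn.ordConnected
  have hx₀mem : φ x₀ ∈ φ '' Ioo a b := ⟨x₀, ⟨hxa, hxb⟩, rfl⟩
  have himg : ∀ t ∈ Ioo a b, (m:ℝ) < φ t ∧ φ t < m + 1 := by
    intro t ht
    constructor
    · by_contra hle
      push_neg at hle
      have hm : (m:ℝ) ∈ φ '' Ioo a b :=
        hord.out ⟨t, ht, rfl⟩ hx₀mem ⟨hle, hgt.le⟩
      obtain ⟨t', ht', ht'e⟩ := hm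
      exact hnint t' ht' m ht'e
    · by_contra hle
      push_neg at hle
      have hm : ((m:ℝ) + 1) ∈ φ '' Ioo a b :=
        hord.out hx₀mem ⟨t, ht, rfl⟩ ⟨hlt.le, hle⟩
      obtain ⟨t', ht', ht'e⟩ := hm
      refine hnint t' ht' (m + 1) ?_
      rw [ht'e]; push_cast; ring
  have hblim : Tendsto φ (𝓝[<] b) (𝓝 (φ b)) := (hc.tendsto b).mono_left nhdsWithin_le_nhds
  have hmem : ∀ᶠ t in 𝓝[<] b, t ∈ Ioo a b :=
    Ioo_mem_nhdsLT_of_mem ⟨hab, le_rfl⟩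
  have hb1 : (m:ℝ) ≤ φ b := ge_of_tendsto hblim (hmem.mono fun t ht => (himg t ht).1.le)
  have hb2 : φ b ≤ (m:ℝ) + 1 := le_of_tendsto hblim (hmem.mono fun t ht => (himg t ht).2.le)
  obtain ⟨z, hz⟩ := hmb
  have hzcases : φ b = (m:ℝ) ∨ φ b = (m:ℝ) + 1 := by
    rw [hz] at hb1 hb2 ⊢
    have h1 : m ≤ z := by exact_mod_cast hb1
    have h2 : (z:ℝ) ≤ ((m+1:ℤ):ℝ) := by push_cast; linarith
    have h2' : z ≤ m + 1 := by exact_mod_cast h2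
    have : z = m ∨ z = m + 1 := by omega
    rcases this with h | h <;> rw [h] <;> push_cast <;> simp
  rcases hdb.lt_or_gt with hneg | hpos
  · have hev : ∀ᶠ t in 𝓝[<] b, φ b < φ t := by
      have := slope_left_lt hb.neg (by linarith : (0:ℝ) < -db)
      exact this.mono fun t ht => by simpa using ht
    rcases hzcases with h | h
    · rw [hma, h, Real.sign_of_pos hda, Real.sign_of_neg hneg]; ring
    · exfalso
      obtain ⟨t, ht1, ht2⟩ := (hev.and hmem).exists
      have := (himg t ht2).2
      rw [h] at ht1; linarith
  · have hev : ∀ᶠ t in 𝓝[<] b, φ t < φ b := slope_left_lt hb hpos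
    rcases hzcases with h | h
    · exfalso
      obtain ⟨t, ht1, ht2⟩ := (hev.and hmem).exists
      have := (himg t ht2).1
      rw [h] at ht1; linarith
    · rw [hma, h, Real.sign_of_pos hda, Real.sign_of_pos hpos]; ring

lemma segment_cross {φ : ℝ → ℝ} {a b da db : ℝ} {m : ℤ} (hab : a < b)
    (hc : Continuous φ)
    (ha : HasDerivAt φ da a) (hb : HasDerivAt φ db b)
    (hma : φ a = m) (hmb : ∃ z : ℤ, φ b = z)
    (hnint : ∀ t ∈ Ioo a b, ∀ z : ℤ, φ t ≠ z)
    (hda : da ≠ 0) (hdb : db ≠ 0) :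
    φ b - φ a = (Real.sign da + Real.sign db) / 2 := by
  rcases hda.lt_or_gt with hneg | hpos
  · have h := segment_pos (φ := fun t => -φ t) (m := -m) hab hc.neg ha.neg hb.neg
      (by simp [hma]) (by obtain ⟨z, hz⟩ := hmb; exact ⟨-z, by beta_reduce; rw [hz]; push_cast; ring⟩)
      (fun t ht z hcontra => by
        refine hnint t ht (-z) ?_
        push_cast at hcontra ⊢
        linarith)
      (by linarith) (neg_ne_zero.2 hdb)
    simp only [Real.sign_neg] at h
    linarith [h]
  · exact segment_pos hab hc ha hb hma hmb hnint hpos hdb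

lemma circle_degree {φ dφ : ℝ → ℝ} {k : ℤ} (hc : Continuous φ)
    (hd : ∀ t, HasDerivAt φ (dφ t) t)
    (hk : ∀ t, φ (t + 1) = φ t + k)
    (S : Finset ℝ) (hS : ∀ t, t ∈ S ↔ t ∈ Ico (0:ℝ) 1 ∧ ∃ z : ℤ, φ t = z)
    (hreg : ∀ t ∈ S, dφ t ≠ 0) :
    (k : ℝ) = ∑ t ∈ S, Real.sign (dφ t) := by
  have hdper : ∀ t, dφ (t + 1) = dφ t := by
    intro t
    have h1 : HasDerivAt (fun s => φ (s + 1)) (dφ (t + 1) * 1) t :=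
      (hd (t + 1)).comp t ((hasDerivAt_id t).add_const 1)
    have h2 : HasDerivAt (fun s => φ (s + 1)) (dφ t) t := by
      have he : (fun s => φ (s + 1)) = fun s => φ s + k := funext fun s => hk s
      rw [he]; exact (hd t).add_const _
    have := h1.unique h2
    linarith [this]
  rcases Nat.eq_zero_or_pos S.card with h0 | hpos
  · have hSe : S = ∅ := Finset.card_eq_zero.1 h0
    rw [hSe, Finset.sum_empty]
    have key : ∀ t ∈ Icc (0:ℝ) 1, ∀ z : ℤ, φ t ≠ z := by
      intro t ht z hz
      rcases eq_or_lt_of_le ht.2 with h1 | h1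
      · have hz0 : φ 0 = ((z - k : ℤ) : ℝ) := by
          have h2 := hk 0
          rw [zero_add] at h2
          rw [h1] at hz
          push_cast
          linarith
        have : (0:ℝ) ∈ S := (hS 0).2 ⟨⟨le_rfl, one_pos⟩, ⟨z - k, hz0⟩⟩
        simp [hSe] at this
      · have : t ∈ S := (hS t).2 ⟨⟨ht.1, h1⟩, ⟨z, hz⟩⟩
        simp [hSe] at this
    have hk1 : φ 1 = φ 0 + k := by simpa using hk 0
    by_contra hne
    have hkne : k ≠ 0 := fun h => hne (by rw [h]; norm_num)
    rcases hkne.lt_or_gt with hlt | hgt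
    · -- k ≤ -1
      have hk'' : k ≤ -1 := by omega
      have hk' : (k:ℝ) ≤ -1 := by exact_mod_cast hk''
      have hmem : ((⌈φ 0⌉ - 1 : ℤ) : ℝ) ∈ Icc (φ 1) (φ 0) := by
        constructor
        · push_cast; linarith [Int.le_ceil (φ 0)]
        · push_cast; linarith [Int.ceil_lt_add_one (φ 0)]
      obtain ⟨t, ht, hφt⟩ := intermediate_value_Icc' zero_le_one hc.continuousOn hmem
      exact key t ht _ hφt
    · have hk' : (1:ℝ) ≤ k := by exact_mod_cast hgt
      have hmem : ((⌊φ 0⌋ + 1 : ℤ) : ℝ) ∈ Icc (φ 0) (φ 1) := by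
        constructor
        · push_cast; linarith [Int.lt_floor_add_one (φ 0)]
        · push_cast; linarith [Int.floor_le (φ 0)]
      obtain ⟨t, ht, hφt⟩ := intermediate_value_Icc zero_le_one hc.continuousOn hmem
      exact key t ht _ hφt
  · set n := S.card with hn
    have hn0 : 0 < n := hpos
    set e := S.orderEmbOfFin rfl with he
    have hemem : ∀ i : Fin n, e i ∈ S := fun i => S.orderEmbOfFin_mem rfl i
    have heIco : ∀ i : Fin n, e i ∈ Ico (0:ℝ) 1 := fun i => ((hS _).1 (hemem i)).1
    have heint : ∀ i : Fin n, ∃ z : ℤ, φ (e i) = z := fun i => ((hS _).1 (hemem i)).2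
    have hmono : StrictMono e := e.strictMono
    have hrange : ∀ t ∈ S, ∃ i : Fin n, e i = t := by
      intro t ht
      have : t ∈ Set.range e := by
        rw [Finset.range_orderEmbOfFin]
        exact ht
      exact this
    set T : ℕ → ℝ := fun j => if h : j < n then e ⟨j, h⟩ else e ⟨0, hn0⟩ + 1 with hT
    have hTn : T n = e ⟨0, hn0⟩ + 1 := dif_neg (lt_irrefl n)
    have hT0 : T 0 = e ⟨0, hn0⟩ := dif_pos hn0
    -- segment claim
    have hseg : ∀ j, j < n → φ (T (j+1)) - φ (T j) =
        (Real.sign (dφ (T j)) + Real.sign (dφ (T (j+1)))) / 2 := by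
      intro j hj
      have hTj : T j = e ⟨j, hj⟩ := dif_pos hj
      obtain ⟨zj, hzj⟩ := heint ⟨j, hj⟩
      rcases lt_or_ge (j+1) n with hj1 | hj1
      · have hTj1 : T (j+1) = e ⟨j+1, hj1⟩ := dif_pos hj1
        rw [hTj, hTj1]
        refine segment_cross (m := zj) (hmono (by exact Fin.mk_lt_mk.2 (Nat.lt_succ_self j)))
          hc (hd _) (hd _) hzj (heint _) ?_ (hreg _ (hemem _)) (hreg _ (hemem _))
        intro t ht z hz
        have htS : t ∈ S := (hS t).2 ⟨⟨le_trans (heIco ⟨j, hj⟩).1 ht.1.le,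
          lt_trans ht.2 (heIco ⟨j+1, hj1⟩).2⟩, ⟨z, hz⟩⟩
        obtain ⟨i, hi⟩ := hrange t htS
        rw [← hi] at ht
        have hlt1 : (⟨j, hj⟩ : Fin n) < i := hmono.lt_iff_lt.1 ht.1
        have hlt2 : i < (⟨j+1, hj1⟩ : Fin n) := hmono.lt_iff_lt.1 ht.2
        simp only [Fin.lt_def, Fin.val_mk] at hlt1 hlt2
        omega
      · have hjn : j + 1 = n := by omega
        have hTj1 : T (j+1) = e ⟨0, hn0⟩ + 1 := dif_neg (by omega)
        obtain ⟨z0, hz0⟩ := heint ⟨0, hn0⟩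
        rw [hTj, hTj1]
        have hab : e ⟨j, hj⟩ < e ⟨0, hn0⟩ + 1 :=
          lt_of_lt_of_le (heIco ⟨j, hj⟩).2 (by linarith [(heIco ⟨0, hn0⟩).1])
        refine segment_cross (m := zj) hab hc (hd _) (hd _) hzj
          ⟨z0 + k, by rw [hk (e ⟨0, hn0⟩), hz0]; push_cast; ring⟩ ?_
          (hreg _ (hemem _)) (by rw [hdper]; exact hreg _ (hemem _))
        intro t ht z hz
        rcases lt_or_ge t 1 with ht1 | ht1
        · have htS : t ∈ S := (hS t).2 ⟨⟨le_trans (heIco ⟨j, hj⟩).1 ht.1.le, ht1⟩, ⟨z, hz⟩⟩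
          obtain ⟨i, hi⟩ := hrange t htS
          have hile : i ≤ (⟨j, hj⟩ : Fin n) := by
            rw [Fin.le_def]
            simp only
            omega
          have := hmono.monotone hile
          rw [hi] at this
          linarith [ht.1]
        · have htm : t - 1 ∈ Ico (0:ℝ) 1 := by
            constructor
            · linarith
            · have := ht.2
              have := (heIco ⟨0, hn0⟩).2
              linarith
          have hφtm : φ (t - 1) = ((z - k : ℤ) : ℝ) := by
            have h2 := hk (t - 1)
            rw [sub_add_cancel] at h2
            push_cast
            rw [hz] at h2
            linarith
          have htS : t - 1 ∈ S := (hS _).2 ⟨htm, ⟨z - k, hφtm⟩⟩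
          obtain ⟨i, hi⟩ := hrange _ htS
          have hile : (⟨0, hn0⟩ : Fin n) ≤ i := by
            simp [Fin.le_def]
          have := hmono.monotone hile
          rw [hi] at this
          linarith [ht.2]
    -- telescoping
    have htel : ∑ j ∈ Finset.range n, (φ (T (j+1)) - φ (T j)) = φ (T n) - φ (T 0) :=
      Finset.sum_range_sub (fun j => φ (T j)) n
    have hkval : φ (T n) - φ (T 0) = k := by
      rw [hTn, hT0, hk]; ring
    set g : ℕ → ℝ := fun j => Real.sign (dφ (T j)) with hg
    have hgn : g n = g 0 := by
      simp only [hg, hTn, hT0, hdper]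
    have hsum1 : ∑ j ∈ Finset.range n, (φ (T (j+1)) - φ (T j)) =
        ∑ j ∈ Finset.range n, (g j + (g (j+1) - g j) / 2) := by
      refine Finset.sum_congr rfl fun j hj => ?_
      rw [hseg j (Finset.mem_range.1 hj)]
      ring
    have hsum2 : ∑ j ∈ Finset.range n, (g j + (g (j+1) - g j) / 2) =
        (∑ j ∈ Finset.range n, g j) + (g n - g 0) / 2 := by
      rw [Finset.sum_add_distrib, ← Finset.sum_div, Finset.sum_range_sub g n]
    have hmain : (k:ℝ) = ∑ j ∈ Finset.range n, g j := by
      rw [← hkval, ← htel, hsum1, hsum2, hgn]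
      ring
    rw [hmain]
    refine Finset.sum_bij (fun j hj => e ⟨j, Finset.mem_range.1 hj⟩) ?_ ?_ ?_ ?_
    · intro a ha; exact hemem _
    · intro a ha b hb hab
      have := e.injective hab
      simpa [Fin.mk.injEq] using this
    · intro t ht
      obtain ⟨i, hi⟩ := hrange t ht
      exact ⟨i.1, Finset.mem_range.2 i.2, by simpa using hi⟩
    · intro j hj
      simp only [hg, hT]
      rw [dif_pos (Finset.mem_range.1 hj)]

lemma sign_pos_mul {c x : ℝ} (hc : 0 < c) : Real.sign (c * x) = Real.sign x := by
  rcases lt_trichotomy x 0 with h|h|h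
  · rw [Real.sign_of_neg h, Real.sign_of_neg (by nlinarith)]
  · simp [h]
  · rw [Real.sign_of_pos h, Real.sign_of_pos (by nlinarith)]

lemma HasDerivAt.im' {f : ℝ → ℂ} {f' : ℂ} {x : ℝ} (h : HasDerivAt f f' x) :
    HasDerivAt (fun t => (f t).im) f'.im x := by
  have := (Complex.imCLM.hasFDerivAt.comp x h.hasFDerivAt).hasDerivAt
  simp at this
  exact this



/-- The index of `p` with respect to a `C¹` loop `γ` equals the signed number of
transversal intersections of `γ` with the ray from `p` in direction `v`. -/
theorem index_eq_ray_crossings (γ : ℝ → ℂ) (hγ : ContDiff ℝ 1 γ)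
    (hper : ∀ t, γ (t + 1) = γ t) (p : ℂ) (hp : ∀ t, γ t ≠ p)
    (v : ℂ) (hv : v ≠ 0)
    (hZ : {t ∈ Set.Ico (0:ℝ) 1 | ∃ s : ℝ, 0 < s ∧ γ t = p + (s : ℂ) * v}.Finite)
    (hreg : ∀ t ∈ {t ∈ Set.Ico (0:ℝ) 1 | ∃ s : ℝ, 0 < s ∧ γ t = p + (s : ℂ) * v},
      v.re * (deriv γ t).im - v.im * (deriv γ t).re ≠ 0) :
    (1 / (2 * (Real.pi : ℂ) * Complex.I)) * (∫ t in (0:ℝ)..1, deriv γ t / (γ t - p))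
      = ((∑ t ∈ hZ.toFinset,
          Real.sign (v.re * (deriv γ t).im - v.im * (deriv γ t).re) : ℝ) : ℂ) := by
  have hγd : ∀ t, HasDerivAt γ (deriv γ t) t :=
    fun t => (hγ.differentiable one_ne_zero t).hasDerivAt
  set u : ℝ → ℂ := fun t => (γ t - p) / v with hu
  set d : ℝ → ℂ := fun t => deriv γ t / v with hd
  have hud : ∀ t, HasDerivAt u (d t) t := fun t => ((hγd t).sub_const p).div_const v
  have hcd : Continuous d := (hγ.continuous_deriv le_rfl).div_const v
  have hcu : Continuous u := ((hγ.continuous).sub continuous_const).div_const v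
  have hune : ∀ t, u t ≠ 0 := fun t => div_ne_zero (sub_ne_zero.2 (hp t)) hv
  have hγdper : ∀ t, deriv γ (t + 1) = deriv γ t := by
    intro t
    have h1 : HasDerivAt (fun s => γ (s + 1)) ((1:ℝ) • deriv γ (t + 1)) t :=
      (hγd (t + 1)).scomp t ((hasDerivAt_id t).add_const 1)
    have h2 : HasDerivAt (fun s => γ (s + 1)) (deriv γ t) t := by
      have he : (fun s => γ (s + 1)) = γ := funext fun s => hper s
      rw [he]; exact hγd t
    have := h1.unique h2
    simpa using this
  set f : ℝ → ℂ := fun t => d t / u t with hf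
  have hcf : Continuous f := hcd.div hcu hune
  set F : ℝ → ℂ := fun t => ∫ s in (0:ℝ)..t, f s with hF
  have hFd : ∀ t, HasDerivAt F (f t) t :=
    fun t => (hcf.integral_hasStrictDerivAt 0 t).hasDerivAt
  set L : ℝ → ℂ := fun t => Complex.log (u 0) + F t with hL
  have hLd : ∀ t, HasDerivAt L (f t) t := fun t => (hFd t).const_add _
  -- exp ∘ L = u
  have hexp : ∀ t, Complex.exp (L t) = u t := by
    have hg : ∀ t, HasDerivAt (fun t => u t * Complex.exp (-L t))
        (d t * Complex.exp (-L t) + u t * (Complex.exp (-L t) * -(f t))) t :=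
      fun t => (hud t).mul ((hLd t).neg.cexp)
    have hg0 : ∀ t, HasDerivAt (fun t => u t * Complex.exp (-L t)) 0 t := by
      intro t
      convert hg t using 1
      simp only [hf]
      field_simp [hune t]
      ring
    have hconst : ∀ t, u t * Complex.exp (-L t) = u 0 * Complex.exp (-L 0) := by
      intro t
      exact is_const_of_deriv_eq_zero (fun x => (hg0 x).differentiableAt)
        (fun x => (hg0 x).deriv) t 0
    have hL0 : L 0 = Complex.log (u 0) := by
      simp [hL, hF, intervalIntegral.integral_same]
    intro t
    have h1 := hconst t
    rw [hL0] at h1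
    rw [Complex.exp_neg, Complex.exp_neg, Complex.exp_log (hune 0),
      mul_inv_cancel₀ (hune 0)] at h1
    field_simp [Complex.exp_ne_zero] at h1
    rw [h1]
  have huper : ∀ t, u (t + 1) = u t := fun t => by simp only [hu, hper t]
  have hint : (∫ t in (0:ℝ)..1, deriv γ t / (γ t - p)) = L 1 - L 0 := by
    have h1 : (fun t => deriv γ t / (γ t - p)) = f := by
      funext t
      simp only [hf, hd, hu]
      have hgp : γ t - p ≠ 0 := sub_ne_zero.2 (hp t)
      field_simp
    have h2 : L 1 - L 0 = F 1 := by
      simp [hL, hF, intervalIntegral.integral_same]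
    rw [h1, h2]
  have hfper : ∀ t, f (t + 1) = f t := by
    intro t
    simp only [hf, hd, hu, hper t, hγdper t]
  have hLper : ∀ t, L (t + 1) - L t = L 1 - L 0 := by
    have hg : ∀ t, HasDerivAt (fun t => L (t + 1) - L t) 0 t := by
      intro t
      have h1 : HasDerivAt (fun s => L (s + 1)) ((1:ℝ) • f (t + 1)) t :=
        (hLd (t + 1)).scomp t ((hasDerivAt_id t).add_const 1)
      have h2 := h1.sub (hLd t)
      have h3 : (1:ℝ) • f (t + 1) - f t = 0 := by
        rw [hfper t]; simp
      rw [h3] at h2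
      exact h2
    intro t
    have h4 := is_const_of_deriv_eq_zero (𝕜 := ℝ) (f := fun t => L (t + 1) - L t)
      (fun x => (hg x).differentiableAt) (fun x => (hg x).deriv) t 0
    simpa using h4
  obtain ⟨kz, hkz⟩ : ∃ n : ℤ, L 1 = L 0 + n * (2 * Real.pi * Complex.I) := by
    apply Complex.exp_eq_exp_iff_exists_int.1
    rw [hexp 1, hexp 0]
    simpa using huper 0
  set θ : ℝ → ℝ := fun t => (L t).im with hθ
  set φ : ℝ → ℝ := fun t => θ t / (2 * Real.pi) with hφ
  set dφ : ℝ → ℝ := fun t => (f t).im / (2 * Real.pi) with hdφ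
  have hφd : ∀ t, HasDerivAt φ (dφ t) t := fun t => ((hLd t).im').div_const _
  have hφc : Continuous φ := by
    have : Differentiable ℝ φ := fun t => (hφd t).differentiableAt
    exact this.continuous
  have hπ : (0:ℝ) < 2 * Real.pi := by positivity
  have hθper : ∀ t, θ (t + 1) = θ t + kz * (2 * Real.pi) := by
    intro t
    have h1 := congrArg Complex.im (hLper t)
    have h2 : L 1 - L 0 = (kz : ℂ) * (2 * Real.pi * Complex.I) := by
      rw [hkz]; ring
    rw [h2] at h1
    simp only [Complex.sub_im, Complex.mul_im, Complex.mul_re, Complex.intCast_re,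
      Complex.intCast_im, Complex.I_re, Complex.I_im, Complex.ofReal_re, Complex.ofReal_im,
      Complex.mul_im, Complex.re_ofNat, Complex.im_ofNat] at h1
    simp only [hθ]
    nlinarith [h1]
  have hφk : ∀ t, φ (t + 1) = φ t + kz := by
    intro t
    simp only [hφ]
    rw [hθper t]
    field_simp
  have hcross : ∀ t, (∃ s : ℝ, 0 < s ∧ γ t = p + (s:ℂ) * v) ↔
      ((u t).im = 0 ∧ 0 < (u t).re) := by
    intro t
    constructor
    · rintro ⟨s, hs, hγt⟩
      have h1 : u t = (s:ℂ) := by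
        simp only [hu]
        rw [hγt]
        field_simp
        ring
      rw [h1]
      simpa using hs
    · rintro ⟨him, hre⟩
      refine ⟨(u t).re, hre, ?_⟩
      have hut : u t = ((u t).re : ℂ) := Complex.ext rfl (by simpa using him)
      have h2 : γ t - p = u t * v := by
        simp only [hu]; field_simp
      rw [hut] at h2
      rw [sub_eq_iff_eq_add'] at h2
      exact h2
  have htrig : ∀ t, ((u t).im = 0 ∧ 0 < (u t).re) ↔ (∃ z : ℤ, φ t = z) := by
    intro t
    have h1 : (u t).im = Real.exp (L t).re * Real.sin (θ t) := by
      rw [← hexp t]; exact Complex.exp_im _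
    have h2 : (u t).re = Real.exp (L t).re * Real.cos (θ t) := by
      rw [← hexp t]; exact Complex.exp_re _
    have hepos := Real.exp_pos (L t).re
    constructor
    · rintro ⟨him, hre⟩
      rw [h1] at him
      rw [h2] at hre
      have hsin : Real.sin (θ t) = 0 := by
        rcases mul_eq_zero.1 him with h | h
        · exact absurd h (ne_of_gt hepos)
        · exact h
      have hcos : 0 < Real.cos (θ t) := by nlinarith
      obtain ⟨n, hn⟩ := Real.sin_eq_zero_iff.1 hsin
      rcases Int.even_or_odd n with ⟨m, hm⟩ | ⟨m, hm⟩
      · refine ⟨m, ?_⟩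
        have hθt : θ t = (m:ℝ) * (2 * Real.pi) := by
          rw [← hn]; push_cast [hm]; ring
        simp only [hφ]
        rw [hθt]
        field_simp
      · exfalso
        have hc : Real.cos (θ t) = -1 := by
          have he : θ t = (m:ℝ) * (2 * Real.pi) + Real.pi := by
            rw [← hn]; push_cast [hm]; ring
          rw [he]
          exact_mod_cast Real.cos_int_mul_two_pi_add_pi m
        linarith
    · rintro ⟨z, hz⟩
      have hθt : θ t = (z:ℝ) * (2 * Real.pi) := by
        simp only [hφ] at hz
        field_simp at hz
        linarith [hz]
      constructor
      · rw [h1, hθt]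
        have he : ((z:ℝ)) * (2 * Real.pi) = ((2 * z : ℤ):ℝ) * Real.pi := by push_cast; ring
        rw [he, Real.sin_int_mul_pi, mul_zero]
      · rw [h2, hθt]
        have he : Real.cos ((z:ℝ) * (2 * Real.pi)) = 1 := by
          exact_mod_cast Real.cos_int_mul_two_pi z
        rw [he]
        simpa using hepos
  have hSiff : ∀ t, t ∈ hZ.toFinset ↔ t ∈ Ico (0:ℝ) 1 ∧ ∃ z : ℤ, φ t = z := by
    intro t
    rw [Set.Finite.mem_toFinset]
    exact and_congr_right fun _ => (hcross t).trans (htrig t)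
  have hdet : ∀ t, v.re * (deriv γ t).im - v.im * (deriv γ t).re
      = (v.re * v.re + v.im * v.im) * (d t).im := by
    intro t
    have h1 : deriv γ t = d t * v := by
      simp only [hd]
      rw [div_mul_cancel₀ _ hv]
    rw [h1, Complex.mul_im, Complex.mul_re]
    ring
  have hvpos : 0 < v.re * v.re + v.im * v.im := by
    have := Complex.normSq_pos.2 hv
    simpa [Complex.normSq_apply] using this
  have hsign : ∀ t ∈ hZ.toFinset,
      Real.sign (v.re * (deriv γ t).im - v.im * (deriv γ t).re) = Real.sign (dφ t) := by
    intro t ht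
    rw [Set.Finite.mem_toFinset] at ht
    obtain ⟨htI, hex⟩ := ht
    obtain ⟨him, hre⟩ := (hcross t).1 hex
    have hut : u t = ((u t).re : ℂ) := Complex.ext rfl (by simpa using him)
    have hfim : (f t).im = (d t).im / (u t).re := by
      simp only [hf]
      rw [hut]
      exact Complex.div_ofReal_im _ _
    have hdφt : dφ t = (1 / ((u t).re * (2 * Real.pi))) * (d t).im := by
      simp only [hdφ]
      rw [hfim]
      field_simp
    rw [hdet t, hdφt, sign_pos_mul hvpos, sign_pos_mul (by positivity)]
  have hregφ : ∀ t ∈ hZ.toFinset, dφ t ≠ 0 := by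
    intro t ht hzero
    have h0 := hsign t ht
    rw [hzero, Real.sign_zero] at h0
    have h1 := hreg t (Set.Finite.mem_toFinset hZ |>.1 ht)
    rcases h1.lt_or_gt with h | h
    · rw [Real.sign_of_neg h] at h0; norm_num at h0
    · rw [Real.sign_of_pos h] at h0; norm_num at h0
  have hmain : (kz:ℝ) = ∑ t ∈ hZ.toFinset, Real.sign (dφ t) :=
    circle_degree hφc hφd hφk hZ.toFinset hSiff hregφ
  have hsum : ∑ t ∈ hZ.toFinset,
      Real.sign (v.re * (deriv γ t).im - v.im * (deriv γ t).re)
      = ∑ t ∈ hZ.toFinset, Real.sign (dφ t) :=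
    Finset.sum_congr rfl hsign
  rw [hint]
  have hL10 : L 1 - L 0 = (kz : ℂ) * (2 * Real.pi * Complex.I) := by
    rw [hkz]; ring
  rw [hL10]
  rw [hsum, ← hmain]
  have hne : (2 * (Real.pi:ℂ) * Complex.I) ≠ 0 := by
    simp [Real.pi_ne_zero, Complex.I_ne_zero]
  push_cast
  field_simp
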